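/- Let U ⊆ ℂ^N be open, let U* = {conj z : z ∈ U}, and let Φ : ℂ^N × ℂ^N → ℂ be holomorphic on U × U*. Let D ⊆ ℂ^m be a nonempty connected open set and let f : D → ℂ^N be holomorphic with f(D) ⊆ U. Suppose Φ(f(t), conj(f(t))) = 0 for every t ∈ D. Then for every fixed t₀ ∈ D and every t ∈ D one has Φ(f(t), conj(f(t₀))) = 0. -/

import Mathlib

/-- Componentwise complex conjugation on `ℂ^N`. -/
def conjVec {N : ℕ} (z : Fin N → ℂ) : Fin N → ℂ := fun i => (starRingEnd ℂ) (z i)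

open Filter Topology Set

lemma conjVec_conjVec {N : ℕ} (z : Fin N → ℂ) : conjVec (conjVec z) = z := by
  funext i; simp [conjVec]

lemma nnnorm_conjVec {N : ℕ} (z : Fin N → ℂ) : ‖conjVec z‖₊ = ‖z‖₊ := by
  simp [Pi.nnnorm_def, conjVec]

lemma norm_conjVec {N : ℕ} (z : Fin N → ℂ) : ‖conjVec z‖ = ‖z‖ := by
  rw [← coe_nnnorm, ← coe_nnnorm, nnnorm_conjVec]

noncomputable def conjCLM (N : ℕ) : (Fin N → ℂ) →L[ℝ] (Fin N → ℂ) :=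
  ContinuousLinearMap.pi fun i =>
    (Complex.conjCLE.toContinuousLinearMap).comp (ContinuousLinearMap.proj i)

lemma conjCLM_apply {N : ℕ} (z : Fin N → ℂ) : conjCLM N z = conjVec z := rfl


lemma continuous_conjVec {N : ℕ} : Continuous (conjVec (N := N)) := (conjCLM N).continuous

lemma isOpen_conjVec_image {N : ℕ} {U : Set (Fin N → ℂ)} (hU : IsOpen U) :
    IsOpen (conjVec '' U) := by
  have : conjVec '' U = conjVec ⁻¹' U := by
    ext z
    constructor
    · rintro ⟨y, hy, rfl⟩; simpa [conjVec_conjVec] using hy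
    · intro hz; exact ⟨conjVec z, hz, conjVec_conjVec z⟩
  rw [this]
  exact hU.preimage continuous_conjVec

lemma conjVec_add {N : ℕ} (z w : Fin N → ℂ) : conjVec (z + w) = conjVec z + conjVec w := by
  funext i; simp [conjVec]

lemma conjVec_smul {N : ℕ} (c : ℂ) (z : Fin N → ℂ) :
    conjVec (c • z) = (starRingEnd ℂ c) • conjVec z := by
  funext i; simp [conjVec]

/-- conjugate of a continuous multilinear map -/
noncomputable def conjCMM {n : ℕ}
    (P : ContinuousMultilinearMap ℂ (fun _ : Fin n => (Fin m → ℂ)) (Fin N → ℂ)) :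
    ContinuousMultilinearMap ℂ (fun _ : Fin n => (Fin m → ℂ)) (Fin N → ℂ) :=
  MultilinearMap.mkContinuous
    { toFun := fun v => conjVec (P fun i => conjVec (v i))
      map_update_add' := by
        intro _ v i x y
        have h1 : ∀ w : Fin m → ℂ, (fun j => conjVec (Function.update v i w j)) =
            Function.update (fun j => conjVec (v j)) i (conjVec w) := fun w =>
          Function.comp_update conjVec v i w
        simp only [h1, conjVec_add, P.map_update_add]
      map_update_smul' := by
        intro _ v i c x
        have h1 : ∀ w : Fin m → ℂ, (fun j => conjVec (Function.update v i w j)) =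
            Function.update (fun j => conjVec (v j)) i (conjVec w) := fun w =>
          Function.comp_update conjVec v i w
        simp only [h1]
        rw [conjVec_smul, P.map_update_smul, conjVec_smul, starRingEnd_self_apply] } ‖P‖ (by
        intro v
        calc ‖conjVec (P fun i => conjVec (v i))‖ = ‖P fun i => conjVec (v i)‖ := norm_conjVec _
        _ ≤ ‖P‖ * ∏ i, ‖conjVec (v i)‖ := P.le_opNorm _
        _ = ‖P‖ * ∏ i, ‖v i‖ := by simp [norm_conjVec])

lemma conjCMM_apply {N m n : ℕ}
    (P : ContinuousMultilinearMap ℂ (fun _ : Fin n => (Fin m → ℂ)) (Fin N → ℂ))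
    (v : Fin n → (Fin m → ℂ)) :
    conjCMM P v = conjVec (P fun i => conjVec (v i)) := rfl

lemma analyticAt_conj_comp {N m : ℕ} {f : (Fin m → ℂ) → (Fin N → ℂ)} {y : Fin m → ℂ}
    (hf : AnalyticAt ℂ f y) :
    AnalyticAt ℂ (fun s => conjVec (f (conjVec s))) (conjVec y) := by
  obtain ⟨p, r, hpb⟩ := hf
  set q : FormalMultilinearSeries ℂ (Fin m → ℂ) (Fin N → ℂ) := fun n => conjCMM (p n) with hq
  have hqn : ∀ n, ‖q n‖ ≤ ‖p n‖ := fun n =>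
    MultilinearMap.mkContinuous_norm_le _ (norm_nonneg (p n)) _
  have hrad : p.radius ≤ q.radius := by
    refine ENNReal.le_of_forall_nnreal_lt fun r' hr' => ?_
    obtain ⟨C, -, hb⟩ := p.norm_mul_pow_le_of_lt_radius hr'
    exact q.le_radius_of_bound C fun n =>
      le_trans (mul_le_mul_of_nonneg_right (hqn n) (pow_nonneg r'.coe_nonneg n)) (hb n)
  refine ⟨q, r, ?_, hpb.r_pos, ?_⟩
  · exact le_trans hpb.r_le hrad
  · intro z hz
    have hz' : conjVec z ∈ Metric.eball (0 : Fin m → ℂ) r := by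
      rw [EMetric.mem_ball, edist_zero_right] at hz ⊢
      have hen : ‖conjVec z‖ₑ = ‖z‖ₑ := by simp only [enorm_eq_nnnorm, nnnorm_conjVec]
      simpa [hen] using hz
    have h2 := (conjCLM N).hasSum (hpb.hasSum hz')
    have h3 : conjVec (f (conjVec (conjVec y + z)))
        = conjCLM N (f (y + conjVec z)) := by
      rw [conjCLM_apply, conjVec_add, conjVec_conjVec]
    show HasSum (fun n => q n fun _ => z) (conjVec (f (conjVec (conjVec y + z))))
    rw [h3]
    refine HasSum.congr_fun h2 fun n => ?_
    rw [hq]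
    simp only [conjCMM_apply, conjCLM_apply]


lemma update_as_affine {n : ℕ} (z : Fin n → ℂ) (κ : Fin n) (w : ℂ) :
    Function.update z κ w = (fun i => if i = κ then 0 else z i) + w • (Pi.single κ 1 : Fin n → ℂ) := by
  funext i
  by_cases h : i = κ
  · subst h; simp
  · simp [Function.update, h, Pi.single_eq_of_ne h]

lemma realZeroLemma {n : ℕ} (g : (Fin n → ℂ) → ℂ) (p : Fin n → ℂ) (r : ℝ) (hr : 0 < r)
    (hg : AnalyticOnNhd ℂ g (Metric.ball p r)) (hp : ∀ i, (p i).im = 0)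
    (h0 : ∀ z ∈ Metric.ball p r, (∀ i, (z i).im = 0) → g z = 0) :
    ∀ z ∈ Metric.ball p r, g z = 0 := by
  have key : ∀ k : ℕ, ∀ z ∈ Metric.ball p r,
      (∀ i : Fin n, k ≤ (i : ℕ) → (z i).im = 0) → g z = 0 := by
    intro k
    induction k with
    | zero => intro z hz hzr; exact h0 z hz fun i => hzr i (Nat.zero_le _)
    | succ k ih =>
      intro z hz hzr
      by_cases hk : k < n
      · set κ : Fin n := ⟨k, hk⟩
        set φ : ℂ → ℂ := fun w => g (Function.update z κ w) with hφ
        have hmem : ∀ w ∈ Metric.ball (p κ) r, Function.update z κ w ∈ Metric.ball p r := by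
          intro w hw
          rw [Metric.mem_ball] at hw hz ⊢
          rw [dist_pi_lt_iff hr] at hz ⊢
          intro i
          by_cases h : i = κ
          · subst h; simpa using hw
          · rw [Function.update_of_ne h]; exact hz i
        have haff : AnalyticOnNhd ℂ φ (Metric.ball (p κ) r) := by
          intro w hw
          have hA : AnalyticAt ℂ (fun w : ℂ => Function.update z κ w) w := by
            have he : (fun w : ℂ => Function.update z κ w)
                = fun w => (fun i => if i = κ then 0 else z i) + w • (Pi.single κ 1 : Fin n → ℂ) :=
              funext (update_as_affine z κ)
            rw [he]
            exact analyticAt_const.add ((analyticAt_id).smul analyticAt_const)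
          exact (hg _ (hmem w hw)).comp hA
        have hφz : ∀ x : ℝ, ‖(x : ℂ)‖ < r → φ (p κ + x) = 0 := by
          intro x hx
          have hwball : (p κ + (x : ℂ)) ∈ Metric.ball (p κ) r := by
            rw [Metric.mem_ball, dist_comm, Complex.dist_eq]
            simpa using hx
          refine ih _ (hmem _ hwball) ?_
          intro i hi
          by_cases h : i = κ
          · subst h
            rw [Function.update_self]
            simp [Complex.add_im, hp κ]
          · rw [Function.update_of_ne h]
            refine hzr i ?_
            rcases Nat.lt_or_ge (i : ℕ) (k + 1) with h' | h'
            · exact absurd (Fin.ext (Nat.le_antisymm (Nat.le_of_lt_succ h') hi) : i = κ) h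
            · exact h'
        have hfreq : ∃ᶠ w in 𝓝[≠] (p κ), φ w = 0 := by
          set u : ℕ → ℂ := fun j => p κ + ((r / (j + 2) : ℝ) : ℂ) with hu
          have hpos : ∀ j : ℕ, 0 < r / ((j : ℝ) + 2) := fun j =>
            div_pos hr (by positivity)
          have htop : Tendsto (fun j : ℕ => ((j : ℝ) + 2)) atTop atTop :=
            tendsto_atTop_add_const_right _ 2 tendsto_natCast_atTop_atTop
          have h0' : Tendsto (fun j : ℕ => (r / ((j : ℝ) + 2))) atTop (𝓝 0) :=
            Tendsto.div_atTop tendsto_const_nhds htop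
          have h1' : Tendsto u atTop (𝓝 (p κ)) := by
            have := (Complex.continuous_ofReal.tendsto 0).comp h0'
            simpa [hu, Function.comp_def] using tendsto_const_nhds.add this
          have htend : Tendsto u atTop (𝓝[≠] (p κ)) := by
            refine tendsto_nhdsWithin_of_tendsto_nhds_of_eventually_within _ h1' ?_
            refine Eventually.of_forall fun j => ?_
            simp only [hu, mem_compl_iff, mem_singleton_iff, add_eq_left]
            exact_mod_cast (hpos j).ne'
          refine htend.frequently (Frequently.of_forall fun j => ?_)
          refine hφz _ ?_
          rw [Complex.norm_real, Real.norm_eq_abs, abs_of_pos (hpos j)]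
          calc r / ((j : ℝ) + 2) ≤ r / 2 := by
                apply div_le_div_of_nonneg_left hr.le (by norm_num) (by norm_num)
          _ < r := by linarith
        have hEq : EqOn φ 0 (Metric.ball (p κ) r) :=
          haff.eqOn_zero_of_preconnected_of_frequently_eq_zero
            (convex_ball (p κ) r).isPreconnected (Metric.mem_ball_self hr) hfreq
        have hzκ : z κ ∈ Metric.ball (p κ) r := by
          rw [Metric.mem_ball] at hz ⊢
          exact (dist_pi_lt_iff hr).1 hz κ
        have h5 := hEq hzκ
        simp only [hφ, Pi.zero_apply] at h5
        rwa [Function.update_eq_self] at h5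
      · exact ih z hz fun i hi => absurd hi (Nat.not_le.mpr (lt_of_lt_of_le i.isLt (Nat.le_of_not_lt hk)))
  intro z hz
  exact key n z hz fun i hi => absurd hi (Nat.not_le.mpr i.isLt)


/-- If `Φ` is holomorphic on `U × U*` and `Φ (f t, conj (f t)) = 0` along a holomorphic map
`f` on a nonempty connected open set `D` with `f(D) ⊆ U`, then for every fixed `t₀ ∈ D`
and every `t ∈ D` one has `Φ (f t, conj (f t₀)) = 0`. -/
theorem segre_contains_leaf (N m : ℕ) (U : Set (Fin N → ℂ)) (hU : IsOpen U)
    (Φ : (Fin N → ℂ) × (Fin N → ℂ) → ℂ)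
    (hΦ : AnalyticOnNhd ℂ Φ (U ×ˢ (conjVec '' U)))
    (D : Set (Fin m → ℂ)) (hD : IsOpen D) (hDconn : IsConnected D)
    (f : (Fin m → ℂ) → (Fin N → ℂ)) (hf : AnalyticOnNhd ℂ f D)
    (hfU : Set.MapsTo f D U)
    (hzero : ∀ t ∈ D, Φ (f t, conjVec (f t)) = 0) :
    ∀ t₀ ∈ D, ∀ t ∈ D, Φ (f t, conjVec (f t₀)) = 0 := by
  classical
  set fstar : (Fin m → ℂ) → (Fin N → ℂ) := fun s => conjVec (f (conjVec s)) with hfstar_def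
  set Dstar : Set (Fin m → ℂ) := conjVec '' D with hDstar_def
  have hfstar : AnalyticOnNhd ℂ fstar Dstar := by
    rintro x ⟨y, hy, rfl⟩
    exact analyticAt_conj_comp (hf y hy)
  set Ω : Set ((Fin m → ℂ) × (Fin m → ℂ)) := D ×ˢ Dstar with hΩ_def
  have hΩopen : IsOpen Ω := hD.prod (isOpen_conjVec_image hD)
  have hΩconn : IsPreconnected Ω :=
    (hDconn.prod (hDconn.image _ continuous_conjVec.continuousOn)).isPreconnected
  set h : ((Fin m → ℂ) × (Fin m → ℂ)) → ℂ := fun ts => Φ (f ts.1, fstar ts.2) with hh_def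
  have hh : AnalyticOnNhd ℂ h Ω := by
    rintro ⟨t, s⟩ ⟨ht, y, hy, rfl⟩
    have hmem : (f t, fstar (conjVec y)) ∈ U ×ˢ (conjVec '' U) := by
      refine ⟨hfU ht, ⟨f y, hfU hy, ?_⟩⟩
      simp [hfstar_def, conjVec_conjVec]
    have h1 : AnalyticAt ℂ f ((t, conjVec y) : (Fin m → ℂ) × (Fin m → ℂ)).1 := hf t ht
    have h2 : AnalyticAt ℂ fstar ((t, conjVec y) : (Fin m → ℂ) × (Fin m → ℂ)).2 :=
      hfstar _ ⟨y, hy, rfl⟩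
    have hinner : AnalyticAt ℂ (fun ts : (Fin m → ℂ) × (Fin m → ℂ) => (f ts.1, fstar ts.2))
        (t, conjVec y) :=
      ((h1.comp analyticAt_fst).prod (h2.comp analyticAt_snd))
    exact AnalyticAt.comp (g := Φ)
      (f := fun ts : (Fin m → ℂ) × (Fin m → ℂ) =>
        ((f ts.1, fstar ts.2) : (Fin N → ℂ) × (Fin N → ℂ)))
      (x := (t, conjVec y)) (hΦ _ hmem) hinner
  obtain ⟨t₁, ht₁⟩ := hDconn.nonempty
  -- real/imaginary substitution
  set A₁ : (Fin (m + m) → ℂ) →L[ℂ] (Fin m → ℂ) :=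
    ContinuousLinearMap.pi fun i => ContinuousLinearMap.proj (Fin.castAdd m i)
      + Complex.I • ContinuousLinearMap.proj (Fin.natAdd m i) with hA₁_def
  set A₂ : (Fin (m + m) → ℂ) →L[ℂ] (Fin m → ℂ) :=
    ContinuousLinearMap.pi fun i => ContinuousLinearMap.proj (Fin.castAdd m i)
      - Complex.I • ContinuousLinearMap.proj (Fin.natAdd m i) with hA₂_def
  set A : (Fin (m + m) → ℂ) →L[ℂ] ((Fin m → ℂ) × (Fin m → ℂ)) := A₁.prod A₂ with hA_def
  have hA₁_apply : ∀ w i, A₁ w i = w (Fin.castAdd m i) + Complex.I * w (Fin.natAdd m i) := by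
    intro w i; rfl
  have hA₂_apply : ∀ w i, A₂ w i = w (Fin.castAdd m i) - Complex.I * w (Fin.natAdd m i) := by
    intro w i; rfl
  set q : Fin (m + m) → ℂ :=
    Fin.addCases (fun i => ((t₁ i).re : ℂ)) (fun i => ((t₁ i).im : ℂ)) with hq_def
  have hq_left : ∀ i, q (Fin.castAdd m i) = ((t₁ i).re : ℂ) := fun i => Fin.addCases_left i
  have hq_right : ∀ i, q (Fin.natAdd m i) = ((t₁ i).im : ℂ) := fun i => Fin.addCases_right i
  have hq_real : ∀ j, (q j).im = 0 := by
    intro j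
    refine Fin.addCases (motive := fun j => (q j).im = 0) (fun i => ?_) (fun i => ?_) j
    · show (q (Fin.castAdd m i)).im = 0
      rw [hq_left]; simp
    · show (q (Fin.natAdd m i)).im = 0
      rw [hq_right]; simp
  have hAq : A q = (t₁, conjVec t₁) := by
    refine Prod.ext ?_ ?_
    · funext i
      rw [hA_def]
      show A₁ q i = t₁ i
      rw [hA₁_apply, hq_left, hq_right, mul_comm]
      exact Complex.re_add_im _
    · funext i
      rw [hA_def]
      show A₂ q i = conjVec t₁ i
      rw [hA₂_apply, hq_left, hq_right]
      show _ = (starRingEnd ℂ) (t₁ i)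
      apply Complex.ext <;> simp
  have hAqΩ : A q ∈ Ω := by
    rw [hAq]; exact ⟨ht₁, ⟨t₁, ht₁, rfl⟩⟩
  have hpre : IsOpen (A ⁻¹' Ω) := hΩopen.preimage A.continuous
  obtain ⟨ε, hε, hball⟩ := Metric.isOpen_iff.1 hpre q hAqΩ
  set g : (Fin (m + m) → ℂ) → ℂ := fun w => h (A w) with hg_def
  have hgA : AnalyticOnNhd ℂ g (Metric.ball q ε) := fun w hw =>
    (hh _ (hball hw)).comp (A.analyticAt w)
  have hgzero : ∀ z ∈ Metric.ball q ε, (∀ j, (z j).im = 0) → g z = 0 := by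
    intro z hz hzre
    have hAzΩ : A z ∈ Ω := hball hz
    have ht : A₁ z ∈ D := hAzΩ.1
    have hconj : A₂ z = conjVec (A₁ z) := by
      funext i
      rw [hA₂_apply]
      show _ = (starRingEnd ℂ) (A₁ z i)
      rw [hA₁_apply, map_add, map_mul]
      rw [Complex.conj_eq_iff_im.2 (hzre _), Complex.conj_eq_iff_im.2 (hzre _)]
      simp [Complex.conj_I]
      ring
    have : g z = Φ (f (A₁ z), fstar (conjVec (A₁ z))) := by
      rw [hg_def]
      show h (A₁ z, A₂ z) = _
      rw [hconj]
    rw [this]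
    have : fstar (conjVec (A₁ z)) = conjVec (f (A₁ z)) := by
      rw [hfstar_def]
      simp only [conjVec_conjVec]
    rw [this]
    exact hzero _ ht
  have hgz : ∀ z ∈ Metric.ball q ε, g z = 0 :=
    realZeroLemma g q ε hε hgA hq_real hgzero
  -- transfer to a neighborhood of (t₁, conj t₁)
  set B : ((Fin m → ℂ) × (Fin m → ℂ)) → (Fin (m + m) → ℂ) := fun ts =>
    Fin.addCases (fun i => (ts.1 i + ts.2 i) / 2)
      (fun i => (ts.1 i - ts.2 i) / (2 * Complex.I)) with hB_def
  have hB_left : ∀ ts (i : Fin m), B ts (Fin.castAdd m i) = (ts.1 i + ts.2 i) / 2 :=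
    fun ts i => Fin.addCases_left i
  have hB_right : ∀ ts (i : Fin m), B ts (Fin.natAdd m i) = (ts.1 i - ts.2 i) / (2 * Complex.I) :=
    fun ts i => Fin.addCases_right i
  have hBcont : Continuous B := by
    refine continuous_pi fun j => ?_
    refine Fin.addCases (motive := fun j => Continuous fun ts => B ts j)
      (fun i => ?_) (fun i => ?_) j
    · show Continuous fun ts => B ts (Fin.castAdd m i)
      have : (fun ts => B ts (Fin.castAdd m i))
          = fun ts : (Fin m → ℂ) × (Fin m → ℂ) => (ts.1 i + ts.2 i) / 2 := by
        funext ts; rw [hB_left]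
      rw [this]
      fun_prop
    · show Continuous fun ts => B ts (Fin.natAdd m i)
      have : (fun ts => B ts (Fin.natAdd m i))
          = fun ts : (Fin m → ℂ) × (Fin m → ℂ) => (ts.1 i - ts.2 i) / (2 * Complex.I) := by
        funext ts; rw [hB_right]
      rw [this]
      fun_prop
  have hAB : ∀ ts, A (B ts) = ts := by
    intro ts
    refine Prod.ext ?_ ?_
    · funext i
      rw [hA_def]
      show A₁ (B ts) i = ts.1 i
      rw [hA₁_apply, hB_left, hB_right]
      field_simp
      ring
    · funext i
      rw [hA_def]
      show A₂ (B ts) i = ts.2 i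
      rw [hA₂_apply, hB_left, hB_right]
      field_simp
      ring
  have hBq : B (t₁, conjVec t₁) = q := by
    funext j
    refine Fin.addCases (motive := fun j => B (t₁, conjVec t₁) j = q j)
      (fun i => ?_) (fun i => ?_) j
    · show B (t₁, conjVec t₁) (Fin.castAdd m i) = q (Fin.castAdd m i)
      rw [hB_left, hq_left]
      show (t₁ i + (starRingEnd ℂ) (t₁ i)) / 2 = _
      rw [Complex.add_conj]
      push_cast
      ring
    · show B (t₁, conjVec t₁) (Fin.natAdd m i) = q (Fin.natAdd m i)
      rw [hB_right, hq_right]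
      show (t₁ i - (starRingEnd ℂ) (t₁ i)) / (2 * Complex.I) = _
      rw [Complex.sub_conj]
      push_cast
      have h2I : (2 : ℂ) * Complex.I ≠ 0 := by
        simp [Complex.I_ne_zero]
      field_simp
  have hev : h =ᶠ[𝓝 (t₁, conjVec t₁)] 0 := by
    have hWopen : IsOpen (B ⁻¹' Metric.ball q ε) := Metric.isOpen_ball.preimage hBcont
    have hWmem : (t₁, conjVec t₁) ∈ B ⁻¹' Metric.ball q ε := by
      simp only [mem_preimage, hBq]
      exact Metric.mem_ball_self hε
    refine Filter.eventuallyEq_of_mem (hWopen.mem_nhds hWmem) fun ts hts => ?_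
    have := hgz (B ts) hts
    rw [hg_def] at this
    simpa [hAB ts] using this
  have hEq : EqOn h 0 Ω :=
    hh.eqOn_zero_of_preconnected_of_eventuallyEq_zero hΩconn ⟨ht₁, ⟨t₁, ht₁, rfl⟩⟩ hev
  intro t₀ ht₀ t ht
  have hmem : (t, conjVec t₀) ∈ Ω := ⟨ht, ⟨t₀, ht₀, rfl⟩⟩
  have := hEq hmem
  rw [hh_def] at this
  simp only [Pi.zero_apply] at this
  rw [hfstar_def] at this
  simpa [conjVec_conjVec] using this
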